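/- p-adic integral of |x²+1| for p ≡ 1 (mod 4) (the q = p case of Example 43 of the paper): If p is a prime with p ≡ 1 (mod 4), then ∫_{ℤ_p} |x² + 1|_p dμ_Haar(x) = (p − 1)/(p + 1). -/

import Mathlib

open Filter Topology MeasureTheory
open scoped ENNReal

variable {p : ℕ} [Fact p.Prime] [MeasurableSpace ℤ_[p]] [BorelSpace ℤ_[p]]
  (μ : Measure ℤ_[p]) [μ.IsAddLeftInvariant]

lemma aux_ball_measurable (n : ℕ) :
    MeasurableSet {x : ℤ_[p] | ‖x‖ ≤ (p : ℝ) ^ (-(n : ℤ))} := by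
  have : {x : ℤ_[p] | ‖x‖ ≤ (p : ℝ) ^ (-(n : ℤ))} = Metric.closedBall 0 ((p:ℝ) ^ (-(n:ℤ))) := by
    ext x; simp [Metric.mem_closedBall, dist_eq_norm]
  rw [this]; exact measurableSet_closedBall

omit [MeasurableSpace ℤ_[p]] [BorelSpace ℤ_[p]] in
lemma aux_ball_mem_iff (n : ℕ) (x : ℤ_[p]) :
    ‖x‖ ≤ (p : ℝ) ^ (-(n : ℤ)) ↔ PadicInt.toZModPow n x = 0 := by
  rw [PadicInt.norm_le_pow_iff_mem_span_pow, ← PadicInt.ker_toZModPow, RingHom.mem_ker]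

lemma aux_ball_measure (hμ : μ Set.univ = 1) (n : ℕ) :
    μ {x : ℤ_[p] | ‖x‖ ≤ (p : ℝ) ^ (-(n : ℤ))} = ((p : ℝ≥0∞) ^ n)⁻¹ := by
  classical
  have hp : p ≠ 0 := (Fact.out : p.Prime).ne_zero
  haveI : NeZero (p ^ n) := ⟨pow_ne_zero n hp⟩
  set K : Set ℤ_[p] := {x : ℤ_[p] | ‖x‖ ≤ (p : ℝ) ^ (-(n : ℤ))} with hK
  have hKmeas : MeasurableSet K := aux_ball_measurable n
  set f : ZMod (p ^ n) → Set ℤ_[p] := fun c => (PadicInt.toZModPow n) ⁻¹' {c} with hf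
  have hfiber : ∀ c : ZMod (p ^ n), f c = (fun x => (-((c.val : ℤ_[p]))) + x) ⁻¹' K := by
    intro c
    ext x
    simp only [hf, Set.mem_preimage, Set.mem_singleton_iff, hK, Set.mem_setOf_eq,
      aux_ball_mem_iff, map_add, map_neg, map_natCast, ZMod.natCast_zmod_val,
      neg_add_eq_zero]
    exact eq_comm
  have hfm : ∀ c, MeasurableSet (f c) := by
    intro c
    rw [hfiber c]
    exact hKmeas.preimage (measurable_const_add _)
  have hdisj : Pairwise (Function.onFun Disjoint f) := by
    intro a b hab
    simp only [hf, Function.onFun]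
    apply Set.disjoint_left.2
    rintro x hxa hxb
    exact hab (hxa.symm.trans hxb)
  have hcover : (⋃ c, f c) = Set.univ := by
    ext x; simp [hf]
  have hmeasf : ∀ c, μ (f c) = μ K := by
    intro c
    rw [hfiber c]
    exact measure_preimage_add μ _ K
  have h1 : (1 : ℝ≥0∞) = ∑' c : ZMod (p ^ n), μ (f c) := by
    rw [← hμ, ← hcover, measure_iUnion hdisj hfm]
  rw [tsum_eq_sum (s := Finset.univ) (by simp)] at h1
  simp only [hmeasf, Finset.sum_const, Finset.card_univ, ZMod.card, nsmul_eq_mul] at h1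
  have hpn : ((p : ℝ≥0∞) ^ n) ≠ 0 := by positivity
  have hpn' : ((p : ℝ≥0∞) ^ n) ≠ ∞ := ENNReal.pow_ne_top (ENNReal.natCast_ne_top p)
  have : ((p ^ n : ℕ) : ℝ≥0∞) = (p : ℝ≥0∞) ^ n := by push_cast; ring
  rw [this] at h1
  calc μ K = ((p : ℝ≥0∞) ^ n)⁻¹ * ((p : ℝ≥0∞) ^ n * μ K) := by
        rw [← mul_assoc, ENNReal.inv_mul_cancel hpn hpn', one_mul]
    _ = ((p : ℝ≥0∞) ^ n)⁻¹ := by rw [← h1, mul_one]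

lemma aux_sphere_eq (n : ℕ) :
    {x : ℤ_[p] | ‖x‖ = (p : ℝ) ^ (-(n : ℤ))} =
      {x : ℤ_[p] | ‖x‖ ≤ (p : ℝ) ^ (-(n : ℤ))} \
        {x : ℤ_[p] | ‖x‖ ≤ (p : ℝ) ^ (-((n+1 : ℕ) : ℤ))} := by
  ext x
  simp only [Set.mem_setOf_eq, Set.mem_diff, not_le]
  have h := PadicInt.norm_le_pow_iff_norm_lt_pow_add_one x (-((n+1:ℕ):ℤ))
  have he : (-((n+1:ℕ):ℤ) + 1) = -(n:ℤ) := by push_cast; ring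
  rw [he] at h
  have hp1 : (1:ℝ) < (p:ℝ) := by exact_mod_cast (Fact.out : p.Prime).one_lt
  constructor
  · intro hx
    refine ⟨le_of_eq hx, ?_⟩
    rw [hx]
    exact zpow_lt_zpow_right₀ hp1 (by push_cast; omega)
  · rintro ⟨h1, h2⟩
    rcases lt_or_eq_of_le h1 with h3 | h3
    · exact absurd (h.2 h3) (not_le.2 h2)
    · exact h3

lemma aux_sphere_measure (hμ : μ Set.univ = 1) (n : ℕ) :
    μ {x : ℤ_[p] | ‖x‖ = (p : ℝ) ^ (-(n : ℤ))} =
      ((p : ℝ≥0∞) ^ n)⁻¹ - ((p : ℝ≥0∞) ^ (n+1))⁻¹ := by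
  have hp1 : (1:ℝ) < (p:ℝ) := by exact_mod_cast (Fact.out : p.Prime).one_lt
  rw [aux_sphere_eq, measure_diff ?_ ?_ ?_, aux_ball_measure μ hμ, aux_ball_measure μ hμ]
  · intro x hx
    simp only [Set.mem_setOf_eq] at hx ⊢
    refine hx.trans (le_of_lt ?_)
    apply zpow_lt_zpow_right₀ hp1 (by push_cast; omega)
  · exact (aux_ball_measurable (n+1)).nullMeasurableSet
  · rw [aux_ball_measure μ hμ]
    exact ENNReal.inv_ne_top.2 (pow_ne_zero _ (Nat.cast_ne_zero.2 (Fact.out : p.Prime).ne_zero))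

lemma aux_zero_measure (hμ : μ Set.univ = 1) : μ {(0 : ℤ_[p])} = 0 := by
  have hple : ∀ n : ℕ, μ {(0 : ℤ_[p])} ≤ ((p : ℝ≥0∞)⁻¹) ^ n := by
    intro n
    have : ({(0 : ℤ_[p])} : Set ℤ_[p]) ⊆ {x : ℤ_[p] | ‖x‖ ≤ (p : ℝ) ^ (-(n : ℤ))} := by
      rintro x rfl
      simp [Set.mem_setOf_eq]
    refine (measure_mono this).trans ?_
    rw [aux_ball_measure μ hμ, ← ENNReal.inv_pow]
  have hlt : (p : ℝ≥0∞)⁻¹ < 1 := by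
    rw [ENNReal.inv_lt_one]
    exact_mod_cast (Fact.out : p.Prime).one_lt
  have htend := ENNReal.tendsto_pow_atTop_nhds_zero_of_lt_one hlt
  exact le_antisymm (ge_of_tendsto' htend hple) zero_le

lemma aux_key_integral (hμ : μ Set.univ = 1) :
    ∫ x in {x : ℤ_[p] | ‖x‖ ≤ (p : ℝ) ^ (-((1:ℕ) : ℤ))}, ‖x‖ ∂μ =
      ((p : ℝ) * ((p : ℝ) + 1))⁻¹ := by
  haveI : IsProbabilityMeasure μ := ⟨hμ⟩
  have hp1 : (1:ℝ) < (p:ℝ) := by exact_mod_cast (Fact.out : p.Prime).one_lt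
  have hint : Integrable (fun x : ℤ_[p] => ‖x‖) μ :=
    continuous_norm.integrable_of_hasCompactSupport (HasCompactSupport.of_compactSpace _)
  set S : ℕ → Set ℤ_[p] := fun n => {x : ℤ_[p] | ‖x‖ = (p : ℝ) ^ (-((n+1 : ℕ) : ℤ))} with hS
  have hSmeas : ∀ n, MeasurableSet (S n) := by
    intro n
    have : S n = Metric.sphere (0 : ℤ_[p]) ((p:ℝ) ^ (-((n+1 : ℕ) : ℤ))) := by
      ext x; simp [hS, Metric.mem_sphere, dist_eq_norm]
    rw [this]; exact Metric.isClosed_sphere.measurableSet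
  have hSdisj : Pairwise (Function.onFun Disjoint S) := by
    intro a b hab
    apply Set.disjoint_left.2
    rintro x hxa hxb
    simp only [hS, Set.mem_setOf_eq] at hxa hxb
    rw [hxa] at hxb
    have := zpow_right_injective₀ (by positivity) (ne_of_gt hp1) hxb
    omega
  have hU : (⋃ n, S n) = {x : ℤ_[p] | ‖x‖ ≤ (p : ℝ) ^ (-((1:ℕ) : ℤ))} \ {(0:ℤ_[p])} := by
    ext x
    simp only [Set.mem_iUnion, hS, Set.mem_setOf_eq, Set.mem_diff, Set.mem_singleton_iff]
    constructor
    · rintro ⟨n, hn⟩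
      constructor
      · rw [hn]
        exact zpow_le_zpow_right₀ (le_of_lt hp1) (by push_cast; omega)
      · intro h0
        rw [h0, norm_zero] at hn
        exact absurd hn.symm (ne_of_gt (by positivity))
    · rintro ⟨hle, h0⟩
      have hval := PadicInt.norm_eq_zpow_neg_valuation h0
      have hv1 : 1 ≤ x.valuation := by
        by_contra hv
        push_neg at hv
        have hv0 : x.valuation = 0 := by omega
        rw [hval, hv0] at hle
        simp at hle
        have h2 : (p:ℝ) * (p:ℝ)⁻¹ = 1 := mul_inv_cancel₀ (by positivity)
        nlinarith
      refine ⟨x.valuation - 1, ?_⟩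
      rw [hval]
      congr 1
      omega
  have hdiff : (({x : ℤ_[p] | ‖x‖ ≤ (p : ℝ) ^ (-((1:ℕ) : ℤ))} \ ({(0:ℤ_[p])} : Set ℤ_[p]) : Set ℤ_[p])) =ᵐ[μ]
      ({x : ℤ_[p] | ‖x‖ ≤ (p : ℝ) ^ (-((1:ℕ) : ℤ))} : Set ℤ_[p]) :=
    MeasureTheory.diff_null_ae_eq_self (aux_zero_measure μ hμ)
  rw [← setIntegral_congr_set hdiff, ← hU, integral_iUnion hSmeas hSdisj hint.integrableOn]
  have hp0 : (p:ℝ) ≠ 0 := by positivity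
  have hterm : ∀ n, ∫ x in S n, ‖x‖ ∂μ =
      ((p:ℝ)⁻¹ * ((p:ℝ)⁻¹ - ((p:ℝ)⁻¹)^2)) * ((((p:ℝ)⁻¹)^2)^n) := by
    intro n
    rw [setIntegral_congr_fun (hSmeas n) (fun x hx => hx), setIntegral_const, measureReal_def,
      aux_sphere_measure μ hμ (n+1)]
    have hb : ((p : ℝ≥0∞) ^ (n+2))⁻¹ ≤ ((p : ℝ≥0∞) ^ (n+1))⁻¹ := by
      apply ENNReal.inv_le_inv.2
      exact pow_le_pow_right₀ (by exact_mod_cast (Fact.out : p.Prime).one_lt.le) (by omega)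
    have ha : ((p : ℝ≥0∞) ^ (n+1))⁻¹ ≠ ⊤ :=
      ENNReal.inv_ne_top.2 (pow_ne_zero _ (Nat.cast_ne_zero.2 (Fact.out : p.Prime).ne_zero))
    rw [ENNReal.toReal_sub_of_le hb ha]
    simp only [ENNReal.toReal_inv, ENNReal.toReal_pow, ENNReal.toReal_natCast, smul_eq_mul]
    rw [zpow_neg, zpow_natCast]
    field_simp
    have hq : (p:ℝ)^(n*3) * ((p:ℝ)⁻¹)^(n*2) = (p:ℝ)^n := by
      rw [inv_pow, ← div_eq_mul_inv, div_eq_iff (by positivity)]; ring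
    linear_combination ((p:ℝ)^4 - (p:ℝ)^5) * hq
  simp only [hterm]
  have hr : (((p:ℝ)⁻¹)^2) < 1 := by
    have : (p:ℝ)⁻¹ < 1 := by
      rw [inv_lt_one_iff₀]; right; exact hp1
    exact pow_lt_one₀ (by positivity) this (by omega)
  rw [tsum_mul_left, tsum_geometric_of_lt_one (by positivity) hr]
  have h2 : (1:ℝ) - ((p:ℝ)⁻¹)^2 ≠ 0 := by nlinarith
  have h4 : (p:ℝ)^4 < (p:ℝ)^6 := pow_lt_pow_right₀ hp1 (by omega)
  have h3 : (-(p:ℝ)^4 + (p:ℝ)^6) ≠ 0 := by linarith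
  field_simp [h3]
  have h5 : (p:ℝ) * ((p:ℝ) * (p:ℝ)^2) * ((p:ℝ)^2 - 1) ≠ 0 := by nlinarith
  rw [div_eq_one_iff_eq (by nlinarith)]
  ring

omit [MeasurableSpace ℤ_[p]] [BorelSpace ℤ_[p]] in
lemma aux_norm_lt_one_iff_toZMod (x : ℤ_[p]) : ‖x‖ < 1 ↔ PadicInt.toZMod x = 0 := by
  rw [PadicInt.norm_lt_one_iff_dvd, ← Ideal.mem_span_singleton,
    ← PadicInt.maximalIdeal_eq_span_p, ← PadicInt.ker_toZMod, RingHom.mem_ker]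

omit [MeasurableSpace ℤ_[p]] [BorelSpace ℤ_[p]] in
lemma aux_root (hp : p % 4 = 1) : ∃ z : ℤ_[p], z ^ 2 = -1 ∧ ‖z‖ = 1 := by
  haveI : NeZero p := ⟨(Fact.out : p.Prime).ne_zero⟩
  have hp5 : 5 ≤ p := by
    have h2 := (Fact.out : p.Prime).two_le
    rcases Nat.lt_or_ge p 5 with h | h
    · interval_cases p <;> simp_all
    · exact h
  obtain ⟨y, hy⟩ := ZMod.exists_sq_eq_neg_one_iff.2 (by omega : p % 4 ≠ 3)
  set a : ℤ_[p] := ((y.val : ℕ) : ℤ_[p]) with ha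
  have htoZ : PadicInt.toZMod a = y := by
    rw [ha, map_natCast, ZMod.natCast_zmod_val]
  have hy0 : y ≠ 0 := by
    intro h
    rw [h, mul_zero] at hy
    exact absurd hy (neg_ne_zero.2 one_ne_zero)
  have hnorma : ‖a‖ = 1 := by
    rcases lt_or_eq_of_le (PadicInt.norm_le_one a) with h | h
    · rw [aux_norm_lt_one_iff_toZMod, htoZ] at h
      exact absurd h hy0
    · exact h
  have heval : ‖a ^ 2 + 1‖ < 1 := by
    rw [aux_norm_lt_one_iff_toZMod, map_add, map_pow, map_one, htoZ, sq]
    rw [← hy]; ring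
  have hnorm2 : ‖(2 : ℤ_[p])‖ = 1 := by
    rcases lt_or_eq_of_le (PadicInt.norm_le_one (2 : ℤ_[p])) with h | h
    · have : ((2:ℤ) : ℤ_[p]) = (2 : ℤ_[p]) := by norm_cast
      rw [← this] at h
      rw [PadicInt.norm_int_lt_one_iff_dvd] at h
      exact absurd (Int.le_of_dvd (by norm_num) h) (by push_cast; omega)
    · exact h
  set F : Polynomial ℤ_[p] := Polynomial.X ^ 2 + 1 with hF
  have hFeval : ∀ t : ℤ_[p], F.eval t = t ^ 2 + 1 := by
    intro t; simp [hF]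
  have hFderiv : ∀ t : ℤ_[p], F.derivative.eval t = 2 * t := by
    intro t; simp [hF, Polynomial.derivative_pow]
  have hhyp : ‖F.eval a‖ < ‖F.derivative.eval a‖ ^ 2 := by
    rw [hFeval, hFderiv, norm_mul, hnorm2, hnorma]
    simpa using heval
  obtain ⟨z, hz, -⟩ := hensels_lemma hhyp
  rw [Polynomial.coe_aeval_eq_eval, hFeval] at hz
  have hzsq : z ^ 2 = -1 := by linear_combination hz
  refine ⟨z, hzsq, ?_⟩
  have h1 : ‖z‖ ^ 2 = 1 := by
    rw [← norm_pow, hzsq, norm_neg, norm_one]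
  have h2 : (‖z‖ - 1) * (‖z‖ + 1) = 0 := by nlinarith
  rcases mul_eq_zero.1 h2 with h | h
  · linarith
  · have := norm_nonneg z; linarith

/-- The `p`-adic integral of `|x² + 1|_p` over `ℤ_p`, against the normalized Haar
measure (the translation-invariant Borel probability measure on `ℤ_p`), for a
prime `p ≡ 1 (mod 4)`, equals `(p - 1)/(p + 1)`. -/
theorem padic_integral_abs_sq_add_one_of_one_mod_four (p : ℕ) [Fact p.Prime]
    (hp : p % 4 = 1)
    [MeasurableSpace ℤ_[p]] [BorelSpace ℤ_[p]]
    (μ : Measure ℤ_[p]) [μ.IsAddLeftInvariant] (hμ : μ Set.univ = 1) :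
    ∫ x : ℤ_[p], ‖x ^ 2 + 1‖ ∂μ = ((p : ℝ) - 1) / ((p : ℝ) + 1) := by
  haveI : IsProbabilityMeasure μ := ⟨hμ⟩
  have hp1 : (1:ℝ) < (p:ℝ) := by exact_mod_cast (Fact.out : p.Prime).one_lt
  have hp0 : (p:ℝ) ≠ 0 := by positivity
  obtain ⟨z, hzsq, hznorm⟩ := aux_root hp
  have hnorm2 : ‖(2 : ℤ_[p])‖ = 1 := by
    rcases lt_or_eq_of_le (PadicInt.norm_le_one (2 : ℤ_[p])) with h | h
    · have h22 : ((2:ℤ) : ℤ_[p]) = (2 : ℤ_[p]) := by norm_cast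
      rw [← h22, PadicInt.norm_int_lt_one_iff_dvd] at h
      have h5 : 5 ≤ p := by
        have h2 := (Fact.out : p.Prime).two_le
        rcases Nat.lt_or_ge p 5 with h' | h'
        · interval_cases p <;> simp_all
        · exact h'
      exact absurd (Int.le_of_dvd (by norm_num) h) (by push_cast; omega)
    · exact h
  have h2z : ‖(2*z : ℤ_[p])‖ = 1 := by rw [norm_mul, hnorm2, hznorm, mul_one]
  set c1 : ℝ := (p : ℝ) ^ (-((1:ℕ) : ℤ)) with hc1
  have hc1lt : c1 < 1 := by
    have h := zpow_lt_zpow_right₀ hp1 (by norm_num : -((1:ℕ):ℤ) < 0)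
    simpa [hc1] using h
  have hnormle : ∀ x : ℤ_[p], ‖x‖ ≤ c1 ↔ ‖x‖ < 1 := by
    intro x
    have h := PadicInt.norm_le_pow_iff_norm_lt_pow_add_one x (-((1:ℕ):ℤ))
    simpa [hc1] using h
  set K1 : Set ℤ_[p] := {x : ℤ_[p] | ‖x‖ ≤ c1} with hK1
  set B1 : Set ℤ_[p] := {x : ℤ_[p] | ‖x - z‖ ≤ c1} with hB1
  set B2 : Set ℤ_[p] := {x : ℤ_[p] | ‖x + z‖ ≤ c1} with hB2
  have hB1meas : MeasurableSet B1 := by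
    have : B1 = Metric.closedBall z c1 := by
      ext x; simp [hB1, Metric.mem_closedBall, dist_eq_norm]
    rw [this]; exact measurableSet_closedBall
  have hB2meas : MeasurableSet B2 := by
    have : B2 = Metric.closedBall (-z) c1 := by
      ext x; simp [hB2, Metric.mem_closedBall, dist_eq_norm, sub_neg_eq_add]
    rw [this]; exact measurableSet_closedBall
  have hfact : ∀ x : ℤ_[p], x^2 + 1 = (x - z) * (x + z) := by
    intro x; linear_combination hzsq
  have hxz1 : ∀ x ∈ B1, ‖x + z‖ = 1 := by
    intro x hx
    have hlt : ‖x - z‖ < 1 := lt_of_le_of_lt hx hc1lt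
    have he : x + z = (x - z) + 2*z := by ring
    rw [he, PadicInt.norm_add_eq_max_of_ne (by rw [h2z]; exact ne_of_lt hlt), h2z]
    exact max_eq_right (le_of_lt hlt)
  have hxz2 : ∀ x ∈ B2, ‖x - z‖ = 1 := by
    intro x hx
    have hlt : ‖x + z‖ < 1 := lt_of_le_of_lt hx hc1lt
    have he : x - z = (x + z) + (-(2*z)) := by ring
    have hn : ‖(-(2*z) : ℤ_[p])‖ = 1 := by rw [norm_neg, h2z]
    rw [he, PadicInt.norm_add_eq_max_of_ne (by rw [hn]; exact ne_of_lt hlt), hn]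
    exact max_eq_right (le_of_lt hlt)
  have hfB1 : ∀ x ∈ B1, ‖x^2 + 1‖ = ‖x - z‖ := by
    intro x hx
    rw [hfact x, norm_mul, hxz1 x hx, mul_one]
  have hfB2 : ∀ x ∈ B2, ‖x^2 + 1‖ = ‖x + z‖ := by
    intro x hx
    rw [hfact x, norm_mul, hxz2 x hx, one_mul]
  have hd : Disjoint B1 B2 := by
    rw [Set.disjoint_left]
    intro x h1 h2
    have he : (2*z : ℤ_[p]) = (x + z) + (-(x - z)) := by ring
    have hlt : ‖(2*z : ℤ_[p])‖ < 1 := by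
      rw [he]
      calc ‖(x + z) + (-(x - z))‖ ≤ max ‖x + z‖ ‖(-(x - z) : ℤ_[p])‖ :=
            PadicInt.nonarchimedean _ _
        _ < 1 := by
            rw [norm_neg]
            exact max_lt (lt_of_le_of_lt h2 hc1lt) (lt_of_le_of_lt h1 hc1lt)
    rw [h2z] at hlt
    exact lt_irrefl _ hlt
  have hμK1 : μ K1 = (p:ℝ≥0∞)⁻¹ := by
    have h := aux_ball_measure μ hμ 1
    simpa [hK1, hc1] using h
  have hμB1 : μ B1 = (p:ℝ≥0∞)⁻¹ := by
    have he : B1 = (fun x => (-z) + x) ⁻¹' K1 := by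
      ext x
      simp only [hB1, hK1, Set.mem_preimage, Set.mem_setOf_eq, neg_add_eq_sub]
    rw [he, measure_preimage_add, hμK1]
  have hμB2 : μ B2 = (p:ℝ≥0∞)⁻¹ := by
    have he : B2 = (fun x => z + x) ⁻¹' K1 := by
      ext x
      simp only [hB2, hK1, Set.mem_preimage, Set.mem_setOf_eq, add_comm]
    rw [he, measure_preimage_add, hμK1]
  have hf : Continuous (fun x : ℤ_[p] => ‖x^2 + 1‖) :=
    ((continuous_pow 2).add continuous_const).norm
  have hint : Integrable (fun x : ℤ_[p] => ‖x^2+1‖) μ :=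
    hf.integrable_of_hasCompactSupport (HasCompactSupport.of_compactSpace _)
  have hsplit := (integral_add_compl (hB1meas.union hB2meas) hint).symm
  rw [setIntegral_union hd hB2meas hint.integrableOn hint.integrableOn] at hsplit
  have emb1 : MeasurableEmbedding (fun t : ℤ_[p] => z + t) :=
    (Homeomorph.addLeft z).measurableEmbedding
  have him1 : (fun t : ℤ_[p] => z + t) '' K1 = B1 := by
    ext x
    constructor
    · rintro ⟨t, ht, rfl⟩
      simpa [hB1, hK1, add_sub_cancel_left] using ht
    · intro hx
      exact ⟨x - z, hx, by ring⟩
  have hIB1 : ∫ x in B1, ‖x^2+1‖ ∂μ = ((p:ℝ) * ((p:ℝ)+1))⁻¹ := by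
    rw [setIntegral_congr_fun hB1meas (fun x hx => hfB1 x hx), ← him1,
      (measurePreserving_add_left μ z).setIntegral_image_emb emb1 _ _]
    simp only [add_sub_cancel_left]
    exact aux_key_integral μ hμ
  have emb2 : MeasurableEmbedding (fun t : ℤ_[p] => (-z) + t) :=
    (Homeomorph.addLeft (-z)).measurableEmbedding
  have him2 : (fun t : ℤ_[p] => (-z) + t) '' K1 = B2 := by
    ext x
    constructor
    · rintro ⟨t, ht, rfl⟩
      simpa [hB2, hK1, neg_add_cancel_comm] using ht
    · intro hx
      exact ⟨x + z, hx, by ring⟩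
  have hIB2 : ∫ x in B2, ‖x^2+1‖ ∂μ = ((p:ℝ) * ((p:ℝ)+1))⁻¹ := by
    rw [setIntegral_congr_fun hB2meas (fun x hx => hfB2 x hx), ← him2,
      (measurePreserving_add_left μ (-z)).setIntegral_image_emb emb2 _ _]
    have he : ∀ t : ℤ_[p], (-z + t) + z = t := fun t => by ring
    simp only [he]
    exact aux_key_integral μ hμ
  have hR1 : ∀ x ∈ (B1 ∪ B2)ᶜ, ‖x^2+1‖ = 1 := by
    intro x hx
    simp only [Set.mem_compl_iff, Set.mem_union, hB1, hB2, Set.mem_setOf_eq, not_or] at hx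
    obtain ⟨h1, h2⟩ := hx
    rw [hnormle] at h1 h2
    push_neg at h1 h2
    have e1 : ‖x - z‖ = 1 := le_antisymm (PadicInt.norm_le_one _) h1
    have e2 : ‖x + z‖ = 1 := le_antisymm (PadicInt.norm_le_one _) h2
    rw [hfact x, norm_mul, e1, e2, mul_one]
  have hμR : μ (B1 ∪ B2)ᶜ = 1 - ((p:ℝ≥0∞)⁻¹ + (p:ℝ≥0∞)⁻¹) := by
    rw [measure_compl (hB1meas.union hB2meas) (measure_ne_top μ _),
      measure_union hd hB2meas, hμB1, hμB2, measure_univ]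
  have hple : (p:ℝ≥0∞)⁻¹ + (p:ℝ≥0∞)⁻¹ ≤ 1 := by
    have h2 : (p:ℝ≥0∞)⁻¹ ≤ 2⁻¹ := by
      apply ENNReal.inv_le_inv.2
      exact_mod_cast (Fact.out : p.Prime).two_le
    calc (p:ℝ≥0∞)⁻¹ + (p:ℝ≥0∞)⁻¹ ≤ 2⁻¹ + 2⁻¹ := add_le_add h2 h2
      _ = 1 := ENNReal.inv_two_add_inv_two
  have hIR : ∫ x in (B1 ∪ B2)ᶜ, ‖x^2+1‖ ∂μ = 1 - ((p:ℝ)⁻¹ + (p:ℝ)⁻¹) := by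
    rw [setIntegral_congr_fun (hB1meas.union hB2meas).compl hR1, setIntegral_const,
      smul_eq_mul, mul_one, measureReal_def, hμR, ENNReal.toReal_sub_of_le hple ENNReal.one_ne_top]
    have hpt : (p:ℝ≥0∞)⁻¹ ≠ ⊤ :=
      ENNReal.inv_ne_top.2 (Nat.cast_ne_zero.2 (Fact.out : p.Prime).ne_zero)
    rw [ENNReal.toReal_add hpt hpt]
    simp [ENNReal.toReal_inv]
  rw [hsplit, hIB1, hIB2, hIR]
  have hp1' : (p:ℝ) + 1 ≠ 0 := by positivity
  field_simp
  ring
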